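/- arXiv:1701.00521 — 2 statements merged into one kernel-verified Lean document; each statement's English description precedes it below -/
import Mathlib

section
/- For any three smooth vector fields u, b, Γ̃ on ℝ³ (without assuming ∇·Γ̃ = 0), the identity b×[∇×(u×Γ̃)] + u×[∇×(Γ̃×b)] + Γ̃×[u,b] + (u×b)(∇·Γ̃) + ∇(u·(b×Γ̃)) = 0 holds. -/
open scoped BigOperators
open MeasureTheory

noncomputable section

abbrev V3 : Type := Fin 3 → ℝ

/-- Partial derivative of a scalar field in coordinate direction `i`. -/
noncomputable def pd (f : V3 → ℝ) (i : Fin 3) (x : V3) : ℝ :=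
  fderiv ℝ f x (Pi.single i 1)

/-- Gradient of a scalar field on ℝ³. -/
noncomputable def grad3 (f : V3 → ℝ) (x : V3) : V3 := fun i => pd f i x

/-- Divergence of a vector field on ℝ³. -/
noncomputable def div3 (F : V3 → V3) (x : V3) : ℝ := ∑ i, pd (fun y => F y i) i x

/-- Curl of a vector field on ℝ³. -/
noncomputable def curl3 (F : V3 → V3) (x : V3) : V3 :=
  ![pd (fun y => F y 2) 1 x - pd (fun y => F y 1) 2 x,
    pd (fun y => F y 0) 2 x - pd (fun y => F y 2) 0 x,
    pd (fun y => F y 1) 0 x - pd (fun y => F y 0) 1 x]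

/-- Cross product in ℝ³. -/
def cross3 (a b : V3) : V3 :=
  ![a 1 * b 2 - a 2 * b 1, a 2 * b 0 - a 0 * b 2, a 0 * b 1 - a 1 * b 0]

/-- Dot product in ℝ³. -/
def dot3 (a b : V3) : ℝ := ∑ i, a i * b i

/-- Advective derivative (F·∇)G of a vector field G along F. -/
noncomputable def advD (F G : V3 → V3) (x : V3) : V3 :=
  fun j => ∑ i, F x i * pd (fun y => G y j) i x

/-- Time partial derivative of a time-dependent vector field. -/
noncomputable def dtV (F : ℝ → V3 → V3) (t : ℝ) (x : V3) : V3 :=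
  fun i => deriv (fun s => F s x i) t

/-- Time partial derivative of a time-dependent scalar field. -/
noncomputable def dtS (f : ℝ → V3 → ℝ) (t : ℝ) (x : V3) : ℝ :=
  deriv (fun s => f s x) t

/-- Smooth time-dependent vector field. -/
def SmoothTV (F : ℝ → V3 → V3) : Prop := ContDiff ℝ (⊤ : ℕ∞) (Function.uncurry F)

/-- Smooth time-dependent scalar field. -/
def SmoothTS (f : ℝ → V3 → ℝ) : Prop := ContDiff ℝ (⊤ : ℕ∞) (Function.uncurry f)

/-- Smooth (static) vector field. -/
def SmoothV (F : V3 → V3) : Prop := ContDiff ℝ (⊤ : ℕ∞) F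

/-- Smooth (static) scalar field. -/
def SmoothS (f : V3 → ℝ) : Prop := ContDiff ℝ (⊤ : ℕ∞) f

lemma pd_add' {f g : V3 → ℝ} (hf : Differentiable ℝ f) (hg : Differentiable ℝ g) (i : Fin 3) (x : V3) :
    pd (fun y => f y + g y) i x = pd f i x + pd g i x := by
  unfold pd; rw [fderiv_fun_add (hf x) (hg x)]; rfl

lemma pd_sub' {f g : V3 → ℝ} (hf : Differentiable ℝ f) (hg : Differentiable ℝ g) (i : Fin 3) (x : V3) :
    pd (fun y => f y - g y) i x = pd f i x - pd g i x := by
  unfold pd; rw [fderiv_fun_sub (hf x) (hg x)]; rfl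

lemma pd_mul' {f g : V3 → ℝ} (hf : Differentiable ℝ f) (hg : Differentiable ℝ g) (i : Fin 3) (x : V3) :
    pd (fun y => f y * g y) i x = f x * pd g i x + pd f i x * g x := by
  unfold pd; rw [fderiv_fun_mul (hf x) (hg x)]; simp; ring

lemma comp_diff {F : V3 → V3} (hF : SmoothV F) (j : Fin 3) :
    Differentiable ℝ (fun y => F y j) := by
  have : (fun y => F y j) = (fun v : V3 => v j) ∘ F := rfl
  rw [this]
  exact (differentiable_pi.mp (hF.differentiable (by simp))) j

set_option maxHeartbeats 4000000 in
theorem vector_identity_general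
    (u b G : V3 → V3) (hu : SmoothV u) (hb : SmoothV b) (hG : SmoothV G) :
    ∀ x, cross3 (b x) (curl3 (fun y => cross3 (u y) (G y)) x)
      + cross3 (u x) (curl3 (fun y => cross3 (G y) (b y)) x)
      + cross3 (G x) (advD u b x - advD b u x)
      + div3 G x • cross3 (u x) (b x)
      + grad3 (fun y => dot3 (u y) (cross3 (b y) (G y))) x = 0 := by
  intro x
  have hu' := comp_diff hu
  have hb' := comp_diff hb
  have hG' := comp_diff hG
  funext i
  simp only [cross3, curl3, div3, grad3, advD, dot3, Fin.sum_univ_three,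
    Matrix.cons_val_zero, Matrix.cons_val_one, Matrix.head_cons,
    Matrix.cons_val_two, Matrix.tail_cons,
    Pi.add_apply, Pi.sub_apply, Pi.smul_apply, smul_eq_mul, Pi.zero_apply]
  simp (disch := fun_prop) only [pd_sub', pd_add', pd_mul']
  fin_cases i <;>
    simp only [Fin.zero_eta, Fin.mk_one, Fin.isValue, show (⟨2, by omega⟩ : Fin 3) = 2 from rfl,
      Matrix.cons_val_zero, Matrix.cons_val_one, Matrix.head_cons,
      Matrix.cons_val_two, Matrix.tail_cons] <;> ring

end
end

section
/- Let N, M be smooth time-dependent vector fields on ℝ³ satisfying ∂N/∂t + ∇×M = 0 and ∇·N = 0. Then for every smooth scalar function F(x,t) (not necessarily related to N, M), the local conservation law ∂(N·∇F)/∂t + ∇·(M×∇F − F_t N) = 0 holds. -/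
open scoped BigOperators
open MeasureTheory

noncomputable section

/-! ### Auxiliary machinery -/

abbrev E4 : Type := ℝ × V3

/-- Directional derivative of a function on spacetime. -/
noncomputable def Dv (f : E4 → ℝ) (v : E4) (z : E4) : ℝ := fderiv ℝ f z v

/-- Spatial basis directions in spacetime. -/
def sdir (i : Fin 3) : E4 := ((0:ℝ), Pi.single i 1)
/-- Time direction in spacetime. -/
def tdir : E4 := ((1:ℝ), (0:V3))

lemma hTopCast : ((⊤:ℕ∞) : WithTop ℕ∞) + 1 ≤ ((⊤:ℕ∞) : WithTop ℕ∞) := by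
  exact_mod_cast le_top
lemma hOneCast : (1 : WithTop ℕ∞) ≤ ((⊤:ℕ∞) : WithTop ℕ∞) := by
  exact_mod_cast le_top

lemma smooth_Dv {f : E4 → ℝ} (hf : ContDiff ℝ (⊤:ℕ∞) f) (v : E4) :
    ContDiff ℝ (⊤:ℕ∞) (Dv f v) :=
  (ContinuousLinearMap.apply ℝ ℝ v).contDiff.comp (hf.fderiv_right hTopCast)

lemma pd_slice {f : E4 → ℝ} (hf : ContDiff ℝ (⊤:ℕ∞) f) (t : ℝ) (x : V3) (i : Fin 3) :
    pd (fun y => f (t, y)) i x = Dv f (sdir i) (t, x) := by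
  have h1 : HasFDerivAt (fun y : V3 => (t, y)) (ContinuousLinearMap.inr ℝ ℝ V3) x :=
    HasFDerivAt.prodMk (hasFDerivAt_const t x) (hasFDerivAt_id x)
  have h2 := (hf.differentiable (zero_lt_one.trans_le hOneCast).ne' (t, x)).hasFDerivAt
  have h3 : HasFDerivAt (fun y => f (t, y))
      ((fderiv ℝ f (t,x)).comp (ContinuousLinearMap.inr ℝ ℝ V3)) x := h2.comp x h1
  show fderiv ℝ (fun y => f (t, y)) x (Pi.single i 1) = _
  rw [h3.fderiv]
  rfl

lemma dt_slice {f : E4 → ℝ} (hf : ContDiff ℝ (⊤:ℕ∞) f) (t : ℝ) (x : V3) :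
    deriv (fun s => f (s, x)) t = Dv f tdir (t, x) := by
  have h1 : HasFDerivAt (fun s : ℝ => (s, x)) (ContinuousLinearMap.inl ℝ ℝ V3) t :=
    HasFDerivAt.prodMk (hasFDerivAt_id t) (hasFDerivAt_const x t)
  have h2 := (hf.differentiable (zero_lt_one.trans_le hOneCast).ne' (t, x)).hasFDerivAt
  have h3 : HasFDerivAt (fun s => f (s, x))
      ((fderiv ℝ f (t,x)).comp (ContinuousLinearMap.inl ℝ ℝ V3)) t := h2.comp t h1
  rw [deriv, h3.fderiv]
  rfl

lemma diff_slice_t {f : E4 → ℝ} (hf : ContDiff ℝ (⊤:ℕ∞) f) (x : V3) :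
    Differentiable ℝ (fun s => f (s, x)) :=
  (hf.comp (contDiff_id.prodMk contDiff_const)).differentiable (zero_lt_one.trans_le hOneCast).ne'

lemma diff_slice_x {f : E4 → ℝ} (hf : ContDiff ℝ (⊤:ℕ∞) f) (t : ℝ) :
    Differentiable ℝ (fun y => f (t, y)) :=
  (hf.comp (contDiff_const.prodMk contDiff_id)).differentiable (zero_lt_one.trans_le hOneCast).ne'

lemma clairaut {f : E4 → ℝ} (hf : ContDiff ℝ (⊤:ℕ∞) f) (v w z : E4) :
    Dv (Dv f v) w z = Dv (Dv f w) v z := by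
  have hdiff : ∀ y, HasFDerivAt f (fderiv ℝ f y) y := fun y =>
    (hf.differentiable (zero_lt_one.trans_le hOneCast).ne' y).hasFDerivAt
  have h2 : HasFDerivAt (fderiv ℝ f) (fderiv ℝ (fderiv ℝ f) z) z :=
    (((hf.fderiv_right hTopCast).differentiable (zero_lt_one.trans_le hOneCast).ne') z).hasFDerivAt
  have key : ∀ u : E4, fderiv ℝ (fun y => fderiv ℝ f y u) z
      = (ContinuousLinearMap.apply ℝ ℝ u).comp (fderiv ℝ (fderiv ℝ f) z) := fun u =>
    (((ContinuousLinearMap.apply ℝ ℝ u).hasFDerivAt).comp z h2).fderiv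
  have hsymm := second_derivative_symmetric hdiff h2 v w
  show fderiv ℝ (fun y => fderiv ℝ f y v) z w = fderiv ℝ (fun y => fderiv ℝ f y w) z v
  rw [key v, key w]
  exact hsymm.symm

/-- Spacetime component function of a time-dependent vector field. -/
def cmpV (W : ℝ → V3 → V3) (i : Fin 3) : E4 → ℝ := fun z => W z.1 z.2 i

lemma cmpV_smooth {W : ℝ → V3 → V3} (h : SmoothTV W) (i : Fin 3) :
    ContDiff ℝ (⊤:ℕ∞) (cmpV W i) := by
  have h' : ContDiff ℝ (⊤:ℕ∞) (Function.uncurry W) := h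
  exact (ContinuousLinearMap.proj (R := ℝ) (φ := fun _ : Fin 3 => ℝ) i).contDiff.comp h'

lemma pd_cmp {W : ℝ → V3 → V3} (h : SmoothTV W) (i j : Fin 3) (t : ℝ) (x : V3) :
    pd (fun y => W t y i) j x = Dv (cmpV W i) (sdir j) (t, x) :=
  pd_slice (cmpV_smooth h i) t x j

lemma dt_cmp {W : ℝ → V3 → V3} (h : SmoothTV W) (i : Fin 3) (t : ℝ) (x : V3) :
    deriv (fun s => W s x i) t = Dv (cmpV W i) tdir (t, x) :=
  dt_slice (cmpV_smooth h i) t x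

lemma pd_unc {f : ℝ → V3 → ℝ} (h : SmoothTS f) (t : ℝ) (x : V3) (i : Fin 3) :
    pd (f t) i x = Dv (Function.uncurry f) (sdir i) (t, x) :=
  pd_slice h t x i

lemma dtS_unc {f : ℝ → V3 → ℝ} (h : SmoothTS f) (t : ℝ) (x : V3) :
    dtS f t x = Dv (Function.uncurry f) tdir (t, x) :=
  dt_slice h t x

lemma pd_cross_term {u1 v1 u2 v2 u3 v3 : E4 → ℝ}
    (hu1 : ContDiff ℝ (⊤:ℕ∞) u1) (hv1 : ContDiff ℝ (⊤:ℕ∞) v1)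
    (hu2 : ContDiff ℝ (⊤:ℕ∞) u2) (hv2 : ContDiff ℝ (⊤:ℕ∞) v2)
    (hu3 : ContDiff ℝ (⊤:ℕ∞) u3) (hv3 : ContDiff ℝ (⊤:ℕ∞) v3)
    (t : ℝ) (x : V3) (i : Fin 3) :
    pd (fun y => u1 (t,y) * v1 (t,y) - u2 (t,y) * v2 (t,y) - u3 (t,y) * v3 (t,y)) i x
      = (Dv u1 (sdir i) (t,x) * v1 (t,x) + u1 (t,x) * Dv v1 (sdir i) (t,x))
        - (Dv u2 (sdir i) (t,x) * v2 (t,x) + u2 (t,x) * Dv v2 (sdir i) (t,x))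
        - (Dv u3 (sdir i) (t,x) * v3 (t,x) + u3 (t,x) * Dv v3 (sdir i) (t,x)) := by
  have d1 : DifferentiableAt ℝ (fun y => u1 (t,y) * v1 (t,y)) x :=
    ((diff_slice_x hu1 t) x).mul ((diff_slice_x hv1 t) x)
  have d2 : DifferentiableAt ℝ (fun y => u2 (t,y) * v2 (t,y)) x :=
    ((diff_slice_x hu2 t) x).mul ((diff_slice_x hv2 t) x)
  have d3 : DifferentiableAt ℝ (fun y => u3 (t,y) * v3 (t,y)) x :=
    ((diff_slice_x hu3 t) x).mul ((diff_slice_x hv3 t) x)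
  show fderiv ℝ _ x (Pi.single i 1) = _
  rw [fderiv_fun_sub (d1.fun_sub d2) d3, fderiv_fun_sub d1 d2,
    fderiv_fun_mul ((diff_slice_x hu1 t) x) ((diff_slice_x hv1 t) x),
    fderiv_fun_mul ((diff_slice_x hu2 t) x) ((diff_slice_x hv2 t) x),
    fderiv_fun_mul ((diff_slice_x hu3 t) x) ((diff_slice_x hv3 t) x)]
  simp only [ContinuousLinearMap.sub_apply, ContinuousLinearMap.add_apply,
    ContinuousLinearMap.smul_apply, smul_eq_mul]
  have e1 : fderiv ℝ (fun y => u1 (t,y)) x (Pi.single i 1) = Dv u1 (sdir i) (t,x) := pd_slice hu1 t x i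
  have f1 : fderiv ℝ (fun y => v1 (t,y)) x (Pi.single i 1) = Dv v1 (sdir i) (t,x) := pd_slice hv1 t x i
  have e2 : fderiv ℝ (fun y => u2 (t,y)) x (Pi.single i 1) = Dv u2 (sdir i) (t,x) := pd_slice hu2 t x i
  have f2 : fderiv ℝ (fun y => v2 (t,y)) x (Pi.single i 1) = Dv v2 (sdir i) (t,x) := pd_slice hv2 t x i
  have e3 : fderiv ℝ (fun y => u3 (t,y)) x (Pi.single i 1) = Dv u3 (sdir i) (t,x) := pd_slice hu3 t x i
  have f3 : fderiv ℝ (fun y => v3 (t,y)) x (Pi.single i 1) = Dv v3 (sdir i) (t,x) := pd_slice hv3 t x i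
  rw [e1, f1, e2, f2, e3, f3]
  ring

theorem cheviakov_conservation_law
    (N M : ℝ → V3 → V3) (hN : SmoothTV N) (hM : SmoothTV M)
    (heq : ∀ t x, dtV N t x + curl3 (M t) x = 0)
    (hdivN : ∀ t x, div3 (N t) x = 0) :
    ∀ F : ℝ → V3 → ℝ, SmoothTS F →
      ∀ t x, dtS (fun s y => dot3 (N s y) (grad3 (F s) y)) t x
        + div3 (fun y => cross3 (M t y) (grad3 (F t) y) - dtS F t y • N t y) x = 0 := by
  intro F hF t x
  have hFc : ContDiff ℝ (⊤:ℕ∞) (Function.uncurry F) := hF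
  -- Step 1: the time-derivative term
  have e1 : (fun s => dot3 (N s x) (grad3 (F s) x))
      = (fun s => ∑ i, cmpV N i (s, x) * Dv (Function.uncurry F) (sdir i) (s, x)) := by
    funext s
    show (∑ i, N s x i * grad3 (F s) x i) = _
    refine Finset.sum_congr rfl fun i _ => ?_
    have h : grad3 (F s) x i = Dv (Function.uncurry F) (sdir i) (s, x) := pd_unc hF s x i
    rw [h]
    rfl
  have T1 : dtS (fun s y => dot3 (N s y) (grad3 (F s) y)) t x
      = ∑ i, (Dv (cmpV N i) tdir (t, x) * Dv (Function.uncurry F) (sdir i) (t, x)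
          + cmpV N i (t, x) * Dv (Dv (Function.uncurry F) (sdir i)) tdir (t, x)) := by
    show deriv (fun s => dot3 (N s x) (grad3 (F s) x)) t = _
    rw [e1, deriv_fun_sum (fun i _ =>
      ((diff_slice_t (cmpV_smooth hN i) x t).fun_mul (diff_slice_t (smooth_Dv hFc (sdir i)) x t)))]
    refine Finset.sum_congr rfl fun i _ => ?_
    rw [deriv_fun_mul (diff_slice_t (cmpV_smooth hN i) x t) (diff_slice_t (smooth_Dv hFc (sdir i)) x t),
      dt_slice (cmpV_smooth hN i) t x, dt_slice (smooth_Dv hFc (sdir i)) t x]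
  -- Step 2: rewrite the components of the divergence argument
  have key0 : (fun y => (cross3 (M t y) (grad3 (F t) y) - dtS F t y • N t y) 0)
      = (fun y => cmpV M 1 (t,y) * Dv (Function.uncurry F) (sdir 2) (t,y)
          - cmpV M 2 (t,y) * Dv (Function.uncurry F) (sdir 1) (t,y)
          - Dv (Function.uncurry F) tdir (t,y) * cmpV N 0 (t,y)) := by
    funext y
    show M t y 1 * pd (F t) 2 y - M t y 2 * pd (F t) 1 y - dtS F t y * N t y 0 = _
    rw [pd_unc hF t y 2, pd_unc hF t y 1, dtS_unc hF t y]
    rfl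
  have key1 : (fun y => (cross3 (M t y) (grad3 (F t) y) - dtS F t y • N t y) 1)
      = (fun y => cmpV M 2 (t,y) * Dv (Function.uncurry F) (sdir 0) (t,y)
          - cmpV M 0 (t,y) * Dv (Function.uncurry F) (sdir 2) (t,y)
          - Dv (Function.uncurry F) tdir (t,y) * cmpV N 1 (t,y)) := by
    funext y
    show M t y 2 * pd (F t) 0 y - M t y 0 * pd (F t) 2 y - dtS F t y * N t y 1 = _
    rw [pd_unc hF t y 0, pd_unc hF t y 2, dtS_unc hF t y]
    rfl
  have key2 : (fun y => (cross3 (M t y) (grad3 (F t) y) - dtS F t y • N t y) 2)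
      = (fun y => cmpV M 0 (t,y) * Dv (Function.uncurry F) (sdir 1) (t,y)
          - cmpV M 1 (t,y) * Dv (Function.uncurry F) (sdir 0) (t,y)
          - Dv (Function.uncurry F) tdir (t,y) * cmpV N 2 (t,y)) := by
    funext y
    show M t y 0 * pd (F t) 1 y - M t y 1 * pd (F t) 0 y - dtS F t y * N t y 2 = _
    rw [pd_unc hF t y 1, pd_unc hF t y 0, dtS_unc hF t y]
    rfl
  have T2 : div3 (fun y => cross3 (M t y) (grad3 (F t) y) - dtS F t y • N t y) x
      = ((Dv (cmpV M 1) (sdir 0) (t,x) * Dv (Function.uncurry F) (sdir 2) (t,x)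
            + cmpV M 1 (t,x) * Dv (Dv (Function.uncurry F) (sdir 2)) (sdir 0) (t,x))
          - (Dv (cmpV M 2) (sdir 0) (t,x) * Dv (Function.uncurry F) (sdir 1) (t,x)
            + cmpV M 2 (t,x) * Dv (Dv (Function.uncurry F) (sdir 1)) (sdir 0) (t,x))
          - (Dv (Dv (Function.uncurry F) tdir) (sdir 0) (t,x) * cmpV N 0 (t,x)
            + Dv (Function.uncurry F) tdir (t,x) * Dv (cmpV N 0) (sdir 0) (t,x)))
        + ((Dv (cmpV M 2) (sdir 1) (t,x) * Dv (Function.uncurry F) (sdir 0) (t,x)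
            + cmpV M 2 (t,x) * Dv (Dv (Function.uncurry F) (sdir 0)) (sdir 1) (t,x))
          - (Dv (cmpV M 0) (sdir 1) (t,x) * Dv (Function.uncurry F) (sdir 2) (t,x)
            + cmpV M 0 (t,x) * Dv (Dv (Function.uncurry F) (sdir 2)) (sdir 1) (t,x))
          - (Dv (Dv (Function.uncurry F) tdir) (sdir 1) (t,x) * cmpV N 1 (t,x)
            + Dv (Function.uncurry F) tdir (t,x) * Dv (cmpV N 1) (sdir 1) (t,x)))
        + ((Dv (cmpV M 0) (sdir 2) (t,x) * Dv (Function.uncurry F) (sdir 1) (t,x)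
            + cmpV M 0 (t,x) * Dv (Dv (Function.uncurry F) (sdir 1)) (sdir 2) (t,x))
          - (Dv (cmpV M 1) (sdir 2) (t,x) * Dv (Function.uncurry F) (sdir 0) (t,x)
            + cmpV M 1 (t,x) * Dv (Dv (Function.uncurry F) (sdir 0)) (sdir 2) (t,x))
          - (Dv (Dv (Function.uncurry F) tdir) (sdir 2) (t,x) * cmpV N 2 (t,x)
            + Dv (Function.uncurry F) tdir (t,x) * Dv (cmpV N 2) (sdir 2) (t,x))) := by
    show (∑ i, pd (fun y => (cross3 (M t y) (grad3 (F t) y) - dtS F t y • N t y) i) i x) = _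
    rw [Fin.sum_univ_three, key0, key1, key2,
      pd_cross_term (cmpV_smooth hM 1) (smooth_Dv hFc (sdir 2)) (cmpV_smooth hM 2)
        (smooth_Dv hFc (sdir 1)) (smooth_Dv hFc tdir) (cmpV_smooth hN 0) t x 0,
      pd_cross_term (cmpV_smooth hM 2) (smooth_Dv hFc (sdir 0)) (cmpV_smooth hM 0)
        (smooth_Dv hFc (sdir 2)) (smooth_Dv hFc tdir) (cmpV_smooth hN 1) t x 1,
      pd_cross_term (cmpV_smooth hM 0) (smooth_Dv hFc (sdir 1)) (cmpV_smooth hM 1)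
        (smooth_Dv hFc (sdir 0)) (smooth_Dv hFc tdir) (cmpV_smooth hN 2) t x 2]
  -- hypotheses at the point
  have he0 : Dv (cmpV N 0) tdir (t,x)
      + (Dv (cmpV M 2) (sdir 1) (t,x) - Dv (cmpV M 1) (sdir 2) (t,x)) = 0 := by
    have h := congr_fun (heq t x) 0
    simp only [dtV, curl3, Pi.add_apply, Matrix.cons_val_zero, Pi.zero_apply] at h
    rw [dt_cmp hN 0 t x, pd_cmp hM 2 1 t x, pd_cmp hM 1 2 t x] at h
    exact h
  have he1 : Dv (cmpV N 1) tdir (t,x)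
      + (Dv (cmpV M 0) (sdir 2) (t,x) - Dv (cmpV M 2) (sdir 0) (t,x)) = 0 := by
    have h := congr_fun (heq t x) 1
    simp only [dtV, curl3, Pi.add_apply, Matrix.cons_val_one, Matrix.head_cons,
      Pi.zero_apply] at h
    rw [dt_cmp hN 1 t x, pd_cmp hM 0 2 t x, pd_cmp hM 2 0 t x] at h
    exact h
  have he2 : Dv (cmpV N 2) tdir (t,x)
      + (Dv (cmpV M 1) (sdir 0) (t,x) - Dv (cmpV M 0) (sdir 1) (t,x)) = 0 := by
    have h := congr_fun (heq t x) 2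
    simp only [dtV, curl3, Pi.add_apply, Matrix.cons_val_two, Matrix.tail_cons,
      Matrix.head_cons, Pi.zero_apply] at h
    rw [dt_cmp hN 2 t x, pd_cmp hM 1 0 t x, pd_cmp hM 0 1 t x] at h
    exact h
  have hd : Dv (cmpV N 0) (sdir 0) (t,x) + Dv (cmpV N 1) (sdir 1) (t,x)
      + Dv (cmpV N 2) (sdir 2) (t,x) = 0 := by
    have h := hdivN t x
    rw [div3, Fin.sum_univ_three, pd_cmp hN 0 0 t x, pd_cmp hN 1 1 t x, pd_cmp hN 2 2 t x] at h
    exact h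
  have hq20 := clairaut hFc (sdir 2) (sdir 0) (t,x)
  have hq01 := clairaut hFc (sdir 0) (sdir 1) (t,x)
  have hq12 := clairaut hFc (sdir 1) (sdir 2) (t,x)
  have hqt0 := clairaut hFc (sdir 0) tdir (t,x)
  have hqt1 := clairaut hFc (sdir 1) tdir (t,x)
  have hqt2 := clairaut hFc (sdir 2) tdir (t,x)
  rw [T1, T2, Fin.sum_univ_three]
  linear_combination (Dv (Function.uncurry F) (sdir 0) (t,x)) * he0
    + (Dv (Function.uncurry F) (sdir 1) (t,x)) * he1
    + (Dv (Function.uncurry F) (sdir 2) (t,x)) * he2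
    - (Dv (Function.uncurry F) tdir (t,x)) * hd
    + (cmpV N 0 (t,x)) * hqt0 + (cmpV N 1 (t,x)) * hqt1 + (cmpV N 2 (t,x)) * hqt2
    + (cmpV M 1 (t,x)) * hq20 + (cmpV M 2 (t,x)) * hq01 + (cmpV M 0 (t,x)) * hq12

end
end
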